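/- In a real Hilbert space X with bounded bilinear forms: if f_λ satisfies λ(f_λ, v)_X + b(f_λ, v) = λ(0,v) + b(f*, v) + ℓ(v) for all v, where b is a positive semidefinite symmetric bilinear form and ℓ a linear functional, then the energy norm error satisfies (λ‖f_λ - f*‖_X² + b(f_λ - f*, f_λ - f*))^{1/2} ≤ λ^{1/2}‖f*‖_X + sup_{v≠0} ℓ(v)/(λ‖v‖_X² + b(v,v))^{1/2}. -/
import Mathlib


open scoped RealInnerProductSpace

theorem tikhonov_energy_error {X : Type*} [NormedAddCommGroup X] [InnerProductSpace ℝ X]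
    [Nontrivial X] (b : X →L[ℝ] X →L[ℝ] ℝ) (ℓ : X →L[ℝ] ℝ)
    (hsymm : ∀ u v : X, b u v = b v u) (hpsd : ∀ v : X, 0 ≤ b v v)
    (lam : ℝ) (hlam : 0 < lam) (fstar flam : X)
    (heq : ∀ v : X, lam * ⟪flam, v⟫ + b flam v = b fstar v + ℓ v) :
    Real.sqrt (lam * ‖flam - fstar‖ ^ 2 + b (flam - fstar) (flam - fstar)) ≤
      Real.sqrt lam * ‖fstar‖ +
        ⨆ v : {v : X // v ≠ 0}, ℓ v / Real.sqrt (lam * ‖(v : X)‖ ^ 2 + b v v) := by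
  obtain ⟨v₀, hv₀⟩ := exists_ne (0 : X)
  set g : {v : X // v ≠ 0} → ℝ :=
    fun v => ℓ v / Real.sqrt (lam * ‖(v : X)‖ ^ 2 + b v v) with hg
  have hEnn : ∀ v : X, 0 ≤ lam * ‖v‖ ^ 2 + b v v := fun v =>
    add_nonneg (by positivity) (hpsd v)
  have hden : ∀ v : X, Real.sqrt lam * ‖v‖ ≤ Real.sqrt (lam * ‖v‖ ^ 2 + b v v) := by
    intro v
    have h1 : Real.sqrt lam * ‖v‖ = Real.sqrt (lam * ‖v‖ ^ 2) := by
      rw [Real.sqrt_mul hlam.le, Real.sqrt_sq (norm_nonneg v)]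
    rw [h1]
    exact Real.sqrt_le_sqrt (by linarith [hpsd v])
  have hbdd : BddAbove (Set.range g) := by
    refine ⟨‖ℓ‖ / Real.sqrt lam, ?_⟩
    rintro _ ⟨⟨v, hv⟩, rfl⟩
    have hvpos : 0 < ‖v‖ := norm_pos_iff.mpr hv
    have hsl : 0 < Real.sqrt lam := Real.sqrt_pos.mpr hlam
    have h1 : ℓ v ≤ ‖ℓ‖ * ‖v‖ := le_trans (le_abs_self _) (ℓ.le_opNorm v)
    have h2 : ℓ v / Real.sqrt (lam * ‖v‖ ^ 2 + b v v) ≤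
        (‖ℓ‖ * ‖v‖) / (Real.sqrt lam * ‖v‖) :=
      div_le_div₀ (by positivity) h1 (by positivity) (hden v)
    calc g ⟨v, hv⟩ ≤ (‖ℓ‖ * ‖v‖) / (Real.sqrt lam * ‖v‖) := h2
      _ = ‖ℓ‖ / Real.sqrt lam := by
          rw [mul_div_mul_right _ _ (ne_of_gt hvpos)]
  set S : ℝ := ⨆ v : {v : X // v ≠ 0}, g v with hS
  have hSnn : 0 ≤ S := by
    have h1 : g ⟨v₀, hv₀⟩ ≤ S := le_ciSup hbdd _
    have h2 : g ⟨-v₀, neg_ne_zero.mpr hv₀⟩ ≤ S := le_ciSup hbdd _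
    have hgneg : g ⟨-v₀, neg_ne_zero.mpr hv₀⟩ = - g ⟨v₀, hv₀⟩ := by
      simp [hg, neg_div, map_neg, ContinuousLinearMap.neg_apply]
    linarith [hgneg ▸ h2]
  set e : X := flam - fstar with he
  have key : lam * ⟪e, e⟫ + b e e = ℓ e - lam * ⟪fstar, e⟫ := by
    have h := heq e
    have h1 : ⟪flam, e⟫ = ⟪e, e⟫ + ⟪fstar, e⟫ := by
      rw [he]; rw [inner_sub_left]; ring
    have h2 : b flam e = b e e + b fstar e := by
      have h3 : b e e = b flam e - b fstar e := by
        simp only [he, map_sub, ContinuousLinearMap.sub_apply]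
        ring
      linarith
    rw [h1, h2] at h
    linarith
  by_cases hez : e = 0
  · rw [hez]
    simp only [norm_zero, map_zero, ContinuousLinearMap.zero_apply]
    rw [show lam * (0:ℝ) ^ 2 + 0 = 0 by ring, Real.sqrt_zero]
    positivity
  · set E : ℝ := lam * ‖e‖ ^ 2 + b e e with hE
    have hEpos : 0 < E := by
      have : 0 < lam * ‖e‖ ^ 2 := by
        have : 0 < ‖e‖ := norm_pos_iff.mpr hez
        positivity
      linarith [hpsd e]
    have hsE : 0 < Real.sqrt E := Real.sqrt_pos.mpr hEpos
    have hinner : ⟪e, e⟫ = ‖e‖ ^ 2 := real_inner_self_eq_norm_sq e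
    have hle : ℓ e ≤ S * Real.sqrt E := by
      have h1 : g ⟨e, hez⟩ ≤ S := le_ciSup hbdd _
      have h2 : g ⟨e, hez⟩ = ℓ e / Real.sqrt E := rfl
      rw [h2] at h1
      calc ℓ e = (ℓ e / Real.sqrt E) * Real.sqrt E := by
            field_simp
        _ ≤ S * Real.sqrt E := mul_le_mul_of_nonneg_right h1 hsE.le
    have hne : Real.sqrt lam * ‖e‖ ≤ Real.sqrt E := hden e
    have hin : - ⟪fstar, e⟫ ≤ ‖fstar‖ * ‖e‖ := by
      have := abs_real_inner_le_norm fstar e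
      have := neg_abs_le ⟪fstar, e⟫
      linarith
    have hEeq : E = ℓ e - lam * ⟪fstar, e⟫ := by
      rw [hE, ← hinner]; exact key
    have hbound : E ≤ (Real.sqrt lam * ‖fstar‖ + S) * Real.sqrt E := by
      have h3 : lam * (‖fstar‖ * ‖e‖) =
          (Real.sqrt lam * ‖fstar‖) * (Real.sqrt lam * ‖e‖) := by
        rw [show (Real.sqrt lam * ‖fstar‖) * (Real.sqrt lam * ‖e‖) =
          (Real.sqrt lam * Real.sqrt lam) * (‖fstar‖ * ‖e‖) by ring,
          Real.mul_self_sqrt hlam.le]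
      have h4 : (Real.sqrt lam * ‖fstar‖) * (Real.sqrt lam * ‖e‖) ≤
          (Real.sqrt lam * ‖fstar‖) * Real.sqrt E :=
        mul_le_mul_of_nonneg_left hne (by positivity)
      have h5 : lam * (- ⟪fstar, e⟫) ≤ lam * (‖fstar‖ * ‖e‖) :=
        mul_le_mul_of_nonneg_left hin hlam.le
      nlinarith [hle]
    have hsq : Real.sqrt E * Real.sqrt E = E := Real.mul_self_sqrt hEpos.le
    have : Real.sqrt E * Real.sqrt E ≤ (Real.sqrt lam * ‖fstar‖ + S) * Real.sqrt E := by
      rw [hsq]; exact hbound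
    exact le_of_mul_le_mul_right (by linarith [this]) hsE
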